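/- Let A be an r×r real matrix with det A ≠ 0 and all proper minors nonnegative with every row of adj(A) nonzero; fix α ∈ ℝʳ with nonzero alternating-sign coordinates and set y := adj(A)·α. Then y has nonzero coordinates with alternating signs, A y = (det A)·α, and S⁻(Ay) = S⁻(y) = r−1. -/

import Mathlib

open Matrix

/-- `S⁻(x)`: the number of sign changes of `x` after deleting its zero entries. -/
noncomputable def Sminus {n : ℕ} (x : Fin n → ℝ) : ℕ :=
  sSup {m | ∃ f : Fin (m + 1) → Fin n, StrictMono f ∧
    ∀ i : Fin m, x (f i.castSucc) * x (f i.succ) < 0}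

lemma sminus_alt {r : ℕ} (x : Fin r → ℝ)
    (halt : ∀ i : ℕ, ∀ h : i + 1 < r, x ⟨i, Nat.lt_of_succ_lt h⟩ * x ⟨i + 1, h⟩ < 0) :
    Sminus x = r - 1 := by
  unfold Sminus
  cases r with
  | zero =>
      have he : {m | ∃ f : Fin (m + 1) → Fin 0, StrictMono f ∧
          ∀ i : Fin m, x (f i.castSucc) * x (f i.succ) < 0} = ∅ := by
        ext m
        simp only [Set.mem_setOf_eq, Set.mem_empty_iff_false, iff_false]
        rintro ⟨f, -, -⟩
        exact (f 0).elim0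
      rw [he, csSup_empty]
      rfl
  | succ n =>
      have hmem : n ∈ {m | ∃ f : Fin (m + 1) → Fin (n + 1), StrictMono f ∧
          ∀ i : Fin m, x (f i.castSucc) * x (f i.succ) < 0} :=
        ⟨fun i => i, strictMono_id, fun i => halt i.1 (Nat.succ_lt_succ i.2)⟩
      have hub : ∀ m ∈ {m | ∃ f : Fin (m + 1) → Fin (n + 1), StrictMono f ∧
          ∀ i : Fin m, x (f i.castSucc) * x (f i.succ) < 0}, m ≤ n := by
        rintro m ⟨f, hf, -⟩
        have h2 : m + 1 ≤ n + 1 := by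
          simpa using Fintype.card_le_of_injective f hf.injective
        omega
      exact le_antisymm (csSup_le ⟨n, hmem⟩ hub) (le_csSup ⟨n, hub⟩ hmem)

/-- Let `A` be `r×r` with `det A ≠ 0`, all proper minors nonnegative, and no zero row of
`adj(A)`. If `α` has nonzero alternating-sign coordinates and `y := adj(A)·α`, then `y` has
nonzero alternating-sign coordinates, `A y = (det A)·α`, and `S⁻(Ay) = S⁻(y) = r - 1`. -/
theorem stmt14 {r : ℕ} (A : Matrix (Fin r) (Fin r) ℝ) (hdet : A.det ≠ 0)
    (hproper : ∀ p : ℕ, p < r → ∀ (f g : Fin p → Fin r), StrictMono f → StrictMono g →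
      0 ≤ (A.submatrix f g).det)
    (hrows : ∀ i : Fin r, ∃ j, A.adjugate i j ≠ 0)
    (α : Fin r → ℝ) (hα0 : ∀ i, α i ≠ 0)
    (hαalt : ∀ i : ℕ, ∀ h : i + 1 < r, α ⟨i, by omega⟩ * α ⟨i + 1, h⟩ < 0) :
    (∀ i, (A.adjugate.mulVec α) i ≠ 0)
    ∧ (∀ i : ℕ, ∀ h : i + 1 < r,
        (A.adjugate.mulVec α) ⟨i, by omega⟩ * (A.adjugate.mulVec α) ⟨i + 1, h⟩ < 0)
    ∧ A.mulVec (A.adjugate.mulVec α) = A.det • α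
    ∧ Sminus (A.mulVec (A.adjugate.mulVec α)) = r - 1
    ∧ Sminus (A.adjugate.mulVec α) = r - 1 := by
  have hmulvec : A.mulVec (A.adjugate.mulVec α) = A.det • α := by
    rw [mulVec_mulVec, mul_adjugate, smul_mulVec, one_mulVec]
  have hAalt : ∀ i : ℕ, ∀ h : i + 1 < r,
      (A.mulVec (A.adjugate.mulVec α)) ⟨i, by omega⟩ *
        (A.mulVec (A.adjugate.mulVec α)) ⟨i + 1, h⟩ < 0 := by
    intro i h
    rw [hmulvec]
    simp only [Pi.smul_apply, smul_eq_mul]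
    nlinarith [hαalt i h, mul_self_pos.mpr hdet]
  cases r with
  | zero =>
      exact ⟨fun i => i.elim0, fun i h => absurd h (by omega), hmulvec,
        sminus_alt _ (fun i h => absurd h (by omega)),
        sminus_alt _ (fun i h => absurd h (by omega))⟩
  | succ n =>
      -- all entries `(-1)^j * α j` have the same strict sign as `α 0`
      have hc : ∀ j : Fin (n + 1), 0 < ((-1 : ℝ) ^ (j : ℕ) * α j) * α 0 := by
        intro j
        induction j using Fin.induction with
        | zero => simpa using mul_self_pos.mpr (hα0 0)
        | succ j ih =>
            have h1 : α j.castSucc * α j.succ < 0 := hαalt j.1 (Nat.succ_lt_succ j.2)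
            have hsq : 0 < α j.castSucc * α j.castSucc := mul_self_pos.mpr (hα0 _)
            have he : ((-1 : ℝ)) ^ ((j.succ : ℕ)) = -(-1 : ℝ) ^ ((j.castSucc : ℕ)) := by
              simp [pow_succ]
            rw [he]
            nlinarith [mul_neg_of_pos_of_neg ih h1, hsq, ih]
      -- sign of the adjugate entries
      have hadj : ∀ i j : Fin (n + 1), 0 ≤ (-1 : ℝ) ^ ((i : ℕ) + (j : ℕ)) * A.adjugate i j := by
        intro i j
        rw [adjugate_fin_succ_eq_det_submatrix]
        have hm := hproper n (by omega) j.succAbove i.succAbove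
          (Fin.strictMono_succAbove j) (Fin.strictMono_succAbove i)
        have h1 : ((-1 : ℝ)) ^ ((i : ℕ) + (j : ℕ)) * (-1 : ℝ) ^ ((j : ℕ) + (i : ℕ)) = 1 := by
          rw [← pow_add]
          exact Even.neg_one_pow ⟨(i : ℕ) + (j : ℕ), by omega⟩
        calc (0 : ℝ) ≤ (A.submatrix j.succAbove i.succAbove).det := hm
          _ = (-1 : ℝ) ^ ((i : ℕ) + (j : ℕ)) *
              ((-1 : ℝ) ^ (((j : ℕ) + (i : ℕ))) * (A.submatrix j.succAbove i.succAbove).det) := by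
            rw [← mul_assoc, h1, one_mul]
      -- sign of the coordinates of `y`
      have hy : ∀ i : Fin (n + 1),
          0 < ((-1 : ℝ) ^ (i : ℕ) * A.adjugate.mulVec α i) * α 0 := by
        intro i
        have hexp : ((-1 : ℝ) ^ (i : ℕ) * A.adjugate.mulVec α i) * α 0
            = ∑ j : Fin (n + 1), ((-1 : ℝ) ^ ((i : ℕ) + (j : ℕ)) * A.adjugate i j) *
                (((-1 : ℝ) ^ (j : ℕ) * α j) * α 0) := by
          simp only [mulVec, dotProduct, Finset.mul_sum, Finset.sum_mul]
          refine Finset.sum_congr rfl fun j _ => ?_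
          have hpow : ((-1 : ℝ)) ^ ((i : ℕ) + (j : ℕ)) * (-1 : ℝ) ^ ((j : ℕ))
              = (-1 : ℝ) ^ ((i : ℕ)) := by
            rw [← pow_add]
            have : (i : ℕ) + (j : ℕ) + (j : ℕ) = (i : ℕ) + 2 * (j : ℕ) := by omega
            rw [this, pow_add, pow_mul]
            norm_num
          rw [← hpow]
          ring
        rw [hexp]
        obtain ⟨j0, hj0⟩ := hrows i
        refine Finset.sum_pos' (fun j _ => mul_nonneg (hadj i j) (hc j).le)
          ⟨j0, Finset.mem_univ _, mul_pos (lt_of_le_of_ne (hadj i j0) ?_) (hc j0)⟩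
        intro hcon
        have : ((-1 : ℝ)) ^ ((i : ℕ) + (j0 : ℕ)) ≠ 0 := by positivity
        exact hj0 (by
          rcases mul_eq_zero.mp hcon.symm with h | h
          · exact absurd h this
          · exact h)
      have hyne : ∀ i, A.adjugate.mulVec α i ≠ 0 := by
        intro i hzero
        have := hy i
        rw [hzero] at this
        simp at this
      have hyalt : ∀ i : ℕ, ∀ h : i + 1 < n + 1,
          (A.adjugate.mulVec α) ⟨i, by omega⟩ * (A.adjugate.mulVec α) ⟨i + 1, h⟩ < 0 := by
        intro i h
        have h1 : 0 < ((-1 : ℝ) ^ i * A.adjugate.mulVec α ⟨i, by omega⟩) * α 0 := hy ⟨i, by omega⟩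
        have h2 : 0 < ((-1 : ℝ) ^ (i + 1) * A.adjugate.mulVec α ⟨i + 1, h⟩) * α 0 :=
          hy ⟨i + 1, h⟩
        rw [pow_succ] at h2
        have hp : ((-1 : ℝ)) ^ i * (-1 : ℝ) ^ i = 1 := by
          rw [← pow_add]
          exact Even.neg_one_pow ⟨i, rfl⟩
        have H := mul_pos h1 h2
        have He : ((-1 : ℝ) ^ i * A.adjugate.mulVec α ⟨i, by omega⟩ * α 0) *
              ((-1 : ℝ) ^ i * -1 * A.adjugate.mulVec α ⟨i + 1, h⟩ * α 0)
            = -(((-1 : ℝ) ^ i * (-1 : ℝ) ^ i) *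
              ((A.adjugate.mulVec α ⟨i, by omega⟩ * A.adjugate.mulVec α ⟨i + 1, h⟩) *
                (α 0 * α 0))) := by ring
        rw [He, hp, one_mul] at H
        nlinarith [H, mul_self_pos.mpr (hα0 0)]
      exact ⟨hyne, hyalt, hmulvec, sminus_alt _ hAalt, sminus_alt _ hyalt⟩
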